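/- Let f be positive and Riemann integrable on [0,1] with ln∘f Riemann integrable and nonnegative on [0,1]. Then lim_{n→∞} Π_{k=1}^{n} f(k/n)^{1/(n + k/n)} = exp(∫_0^1 ln f(x) dx). -/

import Mathlib

open Filter Finset Real

/-- `f` is Riemann integrable on `[a,b]` with Riemann integral `I`:
for every `ε > 0` there is `δ > 0` such that every tagged partition
`a = x 0 < x 1 < … < x n = b` with mesh `< δ` and tags `ξ k ∈ [x (k-1), x k]`
has Riemann sum within `ε` of `I`. -/
def IsRiemannIntegral (f : ℝ → ℝ) (a b I : ℝ) : Prop :=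
  ∀ ε > 0, ∃ δ > 0, ∀ (n : ℕ) (x ξ : ℕ → ℝ),
    0 < n → x 0 = a → x n = b →
    (∀ k ∈ Finset.Icc 1 n, x (k - 1) < x k) →
    (∀ k ∈ Finset.Icc 1 n, x k - x (k - 1) < δ) →
    (∀ k ∈ Finset.Icc 1 n, ξ k ∈ Set.Icc (x (k - 1)) (x k)) →
    |(∑ k ∈ Finset.Icc 1 n, f (ξ k) * (x k - x (k - 1))) - I| < ε

theorem geometric_mean_limit_disturbed (f : ℝ → ℝ) (I L : ℝ)
    (hpos : ∀ x ∈ Set.Icc (0 : ℝ) 1, 0 < f x)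
    (hf : IsRiemannIntegral f 0 1 I)
    (hlog : IsRiemannIntegral (fun x => Real.log (f x)) 0 1 L)
    (hlognn : ∀ x ∈ Set.Icc (0 : ℝ) 1, 0 ≤ Real.log (f x)) :
    Tendsto (fun n : ℕ =>
      ∏ k ∈ Finset.Icc 1 n, f ((k : ℝ) / n) ^ ((1 : ℝ) / (n + (k : ℝ) / n)))
      atTop (nhds (Real.exp L)) := by
  -- membership fact
  have hmem : ∀ n : ℕ, ∀ k ∈ Finset.Icc 1 n, ((k : ℝ) / n) ∈ Set.Icc (0:ℝ) 1 := by
    intro n k hk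
    rw [Finset.mem_Icc] at hk
    have hn : (0:ℝ) < n := by
      have : 0 < n := lt_of_lt_of_le hk.1 hk.2
      exact_mod_cast this
    constructor
    · positivity
    · rw [div_le_one hn]; exact_mod_cast hk.2
  set A : ℕ → ℝ := fun n => ∑ k ∈ Finset.Icc 1 n, Real.log (f ((k:ℝ)/n)) * (1/n) with hAdef
  set T : ℕ → ℝ := fun n =>
    ∑ k ∈ Finset.Icc 1 n, Real.log (f ((k:ℝ)/n)) * (1/(n + (k:ℝ)/n)) with hTdef
  have hAL : Tendsto A atTop (nhds L) := by
    rw [Metric.tendsto_atTop]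
    intro ε hε
    obtain ⟨δ, hδ, h⟩ := hlog ε hε
    obtain ⟨N, hN⟩ := exists_nat_gt (1/δ)
    refine ⟨N + 1, fun n hn => ?_⟩
    have hn0 : 0 < n := lt_of_lt_of_le (Nat.succ_pos N) hn
    have hnR : (0:ℝ) < n := Nat.cast_pos.mpr hn0
    have hNn : (1:ℝ)/δ < n :=
      hN.trans_le (by exact_mod_cast le_trans (Nat.le_succ N) hn)
    have hδn : 1/(n:ℝ) < δ := by
      rw [div_lt_iff₀ hδ] at hNn
      rw [div_lt_iff₀ hnR]
      linarith [mul_comm δ (n:ℝ)]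
    have hcast : ∀ k ∈ Finset.Icc 1 n, ((k - 1 : ℕ) : ℝ) = (k:ℝ) - 1 := by
      intro k hk
      rw [Finset.mem_Icc] at hk
      have : ((k - 1 : ℕ) : ℝ) = (k:ℝ) - (1:ℕ) := by
        exact_mod_cast Nat.cast_sub hk.1
      simpa using this
    have key := h n (fun k => (k:ℝ)/n) (fun k => (k:ℝ)/n) hn0 (by simp)
      (by field_simp)
      (by
        intro k hk
        have h1 := hcast k hk
        rw [h1]
        rw [div_lt_div_iff₀ hnR hnR]
        nlinarith)
      (by
        intro k hk
        have h1 := hcast k hk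
        rw [h1]
        have : (k:ℝ)/n - ((k:ℝ)-1)/n = 1/n := by ring
        rw [this]; exact hδn)
      (by
        intro k hk
        have h1 := hcast k hk
        simp only [Set.mem_Icc]
        rw [h1]
        refine ⟨?_, le_refl _⟩
        rw [div_le_div_iff₀ hnR hnR]
        nlinarith)
    rw [Real.dist_eq]
    have heq : A n = ∑ k ∈ Finset.Icc 1 n,
        Real.log (f ((k:ℝ)/n)) * ((k:ℝ)/n - ((k-1:ℕ):ℝ)/n) := by
      apply Finset.sum_congr rfl
      intro k hk
      rw [hcast k hk]
      congr 1
      ring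
    rw [heq]
    simpa using key
  -- squeeze for A - T
  have hdiff : Tendsto (fun n => A n - T n) atTop (nhds 0) := by
    have hub : Tendsto (fun n : ℕ => A n * (1/n)) atTop (nhds 0) := by
      have := hAL.mul tendsto_one_div_atTop_nhds_zero_nat
      simpa using this
    refine tendsto_of_tendsto_of_tendsto_of_le_of_le' tendsto_const_nhds hub ?_ ?_
    · filter_upwards [eventually_ge_atTop 1] with n hn
      rw [hAdef, hTdef]
      simp only
      rw [← Finset.sum_sub_distrib]
      apply Finset.sum_nonneg
      intro k hk
      rw [Finset.mem_Icc] at hk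
      have hnR : (0:ℝ) < n := by have : 0 < n := hn; exact_mod_cast this
      have hkn : (0:ℝ) < (k:ℝ)/n := by
        apply div_pos _ hnR
        exact_mod_cast hk.1
      have hlg := hlognn _ (hmem n k (Finset.mem_Icc.mpr hk))
      rw [← mul_sub]
      apply mul_nonneg hlg
      have h1 : (0:ℝ) < n + (k:ℝ)/n := by linarith
      rw [sub_nonneg]
      apply one_div_le_one_div_of_le hnR
      linarith
    · filter_upwards [eventually_ge_atTop 1] with n hn
      rw [hAdef, hTdef]
      simp only
      rw [← Finset.sum_sub_distrib, Finset.sum_mul]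
      apply Finset.sum_le_sum
      intro k hk
      rw [Finset.mem_Icc] at hk
      have hnR : (0:ℝ) < n := by have : 0 < n := hn; exact_mod_cast this
      have hkn : (0:ℝ) < (k:ℝ)/n := by
        apply div_pos _ hnR
        exact_mod_cast hk.1
      have hkn1 : (k:ℝ)/n ≤ 1 := (hmem n k (Finset.mem_Icc.mpr hk)).2
      have hlg := hlognn _ (hmem n k (Finset.mem_Icc.mpr hk))
      rw [← mul_sub, mul_assoc]
      apply mul_le_mul_of_nonneg_left _ hlg
      have h1 : (0:ℝ) < n + (k:ℝ)/n := by linarith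
      have : 1/(n:ℝ) - 1/((n:ℝ) + (k:ℝ)/n) = ((k:ℝ)/n) / (n * (n + (k:ℝ)/n)) := by
        field_simp
        ring
      rw [this]
      rw [div_le_iff₀ (by positivity)]
      have : 1/(n:ℝ) * (1/(n:ℝ)) * ((n:ℝ) * ((n:ℝ) + (k:ℝ)/n)) =
          ((n:ℝ) + (k:ℝ)/n) / n := by field_simp
      rw [this]
      calc (k:ℝ)/n ≤ 1 := hkn1
        _ ≤ ((n:ℝ) + (k:ℝ)/n) / n := by
            rw [le_div_iff₀ hnR]; linarith
  have hTL : Tendsto T atTop (nhds L) := by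
    have := hAL.sub hdiff
    simpa using this
  have hexp : Tendsto (fun n => Real.exp (T n)) atTop (nhds (Real.exp L)) :=
    (Real.continuous_exp.tendsto L).comp hTL
  apply hexp.congr'
  filter_upwards [eventually_ge_atTop 1] with n hn
  rw [hTdef]
  simp only
  rw [Real.exp_sum]
  apply Finset.prod_congr rfl
  intro k hk
  have hf0 := hpos _ (hmem n k hk)
  rw [Real.rpow_def_of_pos hf0]
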